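/- Let (W,S) be a Coxeter system and let Γ be an S-labeled digraph. Then Γ is a W-digraph if and only if Γ_rev is a W-digraph. -/

import Mathlib

open Finsupp

set_option synthInstance.maxHeartbeats 1000000
set_option maxHeartbeats 1000000

noncomputable section

/-- The field `ℚ(u)` of rational functions. -/
abbrev Kq : Type := RatFunc ℚ

/-- The indeterminate `u`. -/
def uu : Kq := RatFunc.X

/-- An `S`-labeled digraph on vertex type `V` with labels in `B`:
`Edge a b s d` means there is an edge from `a` to `b` labeled `s`, which is
dashed if `d = true` and solid if `d = false`.  There are no loops, and every
vertex occurs in exactly one edge with any given label. -/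
structure SLabeledDigraph (V B : Type*) where
  Edge : V → V → B → Bool → Prop
  no_loop : ∀ v s d, ¬ Edge v v s d
  unique_edge : ∀ v s, ∃! e : V × V × Bool,
    (e.1 = v ∨ e.2.1 = v) ∧ Edge e.1 e.2.1 s e.2.2

namespace SLabeledDigraph

variable {V B : Type*} (Γ : SLabeledDigraph V B)

/-- Swap the endpoints of an edge datum. -/
def eswap {V : Type*} (e : V × V × Bool) : V × V × Bool := (e.2.1, e.1, e.2.2)

/-- The reversed digraph `Γ_rev`, with all edge directions reversed but types
and labels kept. -/
def rev : SLabeledDigraph V B where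
  Edge a b s d := Γ.Edge b a s d
  no_loop v s d := Γ.no_loop v s d
  unique_edge v s := by
    obtain ⟨e, ⟨hinc, hedge⟩, huniq⟩ := Γ.unique_edge v s
    refine ⟨eswap e, ⟨Or.symm hinc, hedge⟩, ?_⟩
    rintro e' ⟨hinc', hedge'⟩
    have h1 : eswap e' = e := huniq (eswap e') ⟨Or.symm hinc', hedge'⟩
    calc e' = eswap (eswap e') := rfl
    _ = eswap e := by rw [h1]

/-- The restriction `Γ_J`: same vertices, only edges with labels in `J`. -/
def restrict (J : Set B) : SLabeledDigraph V J where
  Edge a b s d := Γ.Edge a b s.1 d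
  no_loop v s d := Γ.no_loop v s.1 d
  unique_edge v s := Γ.unique_edge v s.1

/-- Directed adjacency (ignoring labels and edge types). -/
def DAdj (a b : V) : Prop := ∃ s d, Γ.Edge a b s d

/-- Undirected adjacency. -/
def UAdj (a b : V) : Prop := Γ.DAdj a b ∨ Γ.DAdj b a

/-- `Γ` is connected if any two vertices are joined by an undirected path. -/
def Connected : Prop := ∀ a b : V, Relation.ReflTransGen Γ.UAdj a b

/-- A source is a vertex at which no edge ends. -/
def IsSource (a : V) : Prop := ∀ b s d, ¬ Γ.Edge b a s d

/-- A sink is a vertex at which no edge begins. -/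
def IsSink (a : V) : Prop := ∀ b s d, ¬ Γ.Edge a b s d

/-- `Γ` is acyclic if it has no nonempty directed circuit. -/
def Acyclic : Prop := ∀ a : V, ¬ Relation.TransGen Γ.DAdj a a

/-- The setoid whose classes are the connected components of `Γ`. -/
def compSetoid : Setoid V :=
  ⟨Relation.ReflTransGen Γ.UAdj,
    ⟨fun _ => Relation.ReflTransGen.refl,
     fun h => (@Relation.ReflTransGen.stdSymm _ Γ.UAdj ⟨fun _ _ hab => Or.symm hab⟩).symm _ _ h,
     fun h1 h2 => Relation.ReflTransGen.trans h1 h2⟩⟩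

end SLabeledDigraph

/-- The Hecke algebra of a Coxeter system over `ℚ(u)`: an associative
`ℚ(u)`-algebra `H` with basis `{T_w : w ∈ W}` such that `T_1 = 1` and
`T_s T_w = T_{sw}` if `ℓ(sw) > ℓ(w)`, while
`T_s T_w = u² T_{sw} + (u² - 1) T_w` if `ℓ(sw) < ℓ(w)`. -/
structure HeckeAlgebra {B W : Type*} [Group W] {M : CoxeterMatrix B}
    (cs : CoxeterSystem M W) (H : Type*) [Ring H] [Algebra Kq H] where
  T : W → H
  basis : Module.Basis W Kq H
  basis_eq : ∀ w, basis w = T w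
  T_one : T 1 = 1
  T_mul_of_lt : ∀ (i : B) (w : W), cs.length w < cs.length (cs.simple i * w) →
    T (cs.simple i) * T w = T (cs.simple i * w)
  T_mul_of_gt : ∀ (i : B) (w : W), cs.length (cs.simple i * w) < cs.length w →
    T (cs.simple i) * T w = (uu ^ 2) • T (cs.simple i * w) + (uu ^ 2 - 1) • T w

variable {B W : Type*} [Group W] {M : CoxeterMatrix B}
variable {H : Type*} [Ring H] [Algebra Kq H]

/-- `ρ` is the representation of `H` on `M(Γ)` (the `ℚ(u)`-vector space with
basis the vertices of `Γ`) in which each `T_s` acts by the operator `τ_s`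
determined by the edges of `Γ`. -/
def WDigraphRep {V : Type*} (cs : CoxeterSystem M W) (ha : HeckeAlgebra cs H)
    (Γ : SLabeledDigraph V B)
    (ρ : H →ₐ[Kq] Module.End Kq (V →₀ Kq)) : Prop :=
  ∀ (a b : V) (i : B),
    (Γ.Edge a b i false →
      ρ (ha.T (cs.simple i)) (single a (1 : Kq)) = single b (1 : Kq) ∧
      ρ (ha.T (cs.simple i)) (single b (1 : Kq))
        = (uu ^ 2 - 1) • single b (1 : Kq) + (uu ^ 2) • single a (1 : Kq)) ∧
    (Γ.Edge a b i true →
      ρ (ha.T (cs.simple i)) (single a (1 : Kq)) = uu • single a (1 : Kq) + (uu + 1) • single b (1 : Kq) ∧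
      ρ (ha.T (cs.simple i)) (single b (1 : Kq))
        = (uu ^ 2 - uu - 1) • single b (1 : Kq) + (uu ^ 2 - uu) • single a (1 : Kq))

/-- `Γ` is a `W`-digraph: the assignment `T_s ↦ τ_s` extends to a
representation of `H` on `M(Γ)`. -/
def IsWDigraph {V : Type*} (cs : CoxeterSystem M W) (ha : HeckeAlgebra cs H)
    (Γ : SLabeledDigraph V B) : Prop :=
  ∃ ρ : H →ₐ[Kq] Module.End Kq (V →₀ Kq), WDigraphRep cs ha Γ ρ



/-! ### Auxiliary development for the proof -/

lemma uu_ne : uu ≠ 0 := RatFunc.X_ne_zero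

lemma q_ne : (uu ^ 2 : Kq) ≠ 0 := pow_ne_zero 2 uu_ne

lemma uu_eq_algebraMap : uu = algebraMap (Polynomial ℚ) Kq Polynomial.X := by
  rw [uu]; exact (RatFunc.algebraMap_X).symm

lemma transcendental_uu : Transcendental ℚ uu := by
  have h : Transcendental ℚ (Polynomial.X : Polynomial ℚ) := Polynomial.transcendental_X ℚ
  have hinj : Function.Injective (algebraMap (Polynomial ℚ) Kq) :=
    IsFractionRing.injective _ _
  have := (transcendental_algebraMap_iff (R := ℚ)
    (a := (Polynomial.X : Polynomial ℚ)) hinj).mpr h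
  rwa [← uu_eq_algebraMap] at this

lemma transcendental_neg_inv : Transcendental ℚ (-uu⁻¹) := by
  intro halg
  apply transcendental_uu
  have h1 : IsAlgebraic ℚ (-uu⁻¹)⁻¹ := halg.inv
  rw [inv_neg, inv_inv] at h1
  obtain ⟨p, hp0, hp⟩ := h1
  refine ⟨p.comp (-Polynomial.X), fun h => hp0 ?_, ?_⟩
  · have h2 := congrArg (fun r => Polynomial.comp r (-Polynomial.X)) h
    simpa [Polynomial.comp_assoc] using h2
  · rw [Polynomial.aeval_comp]; simpa using hp

lemma aeval_inj : Function.Injective (Polynomial.aeval (-uu⁻¹) : Polynomial ℚ →ₐ[ℚ] Kq) :=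
  transcendental_iff_injective.mp transcendental_neg_inv

/-- The involution `u ↦ -u⁻¹` of `ℚ(u)`. -/
def phi : Kq →+* Kq :=
  IsFractionRing.lift (g := (Polynomial.aeval (-uu⁻¹) : Polynomial ℚ →ₐ[ℚ] Kq).toRingHom)
    aeval_inj

lemma phi_uu : phi uu = -uu⁻¹ := by
  rw [uu_eq_algebraMap, phi, IsFractionRing.lift_algebraMap]
  simp [uu]

lemma phi_phi (x : Kq) : phi (phi x) = x := by
  have : (phi.comp phi) = RingHom.id Kq := by
    apply IsLocalization.ringHom_ext (nonZeroDivisors (Polynomial ℚ))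
    apply Polynomial.ringHom_ext
    · intro a
      simp only [RingHom.comp_apply]
      have hC : (algebraMap (Polynomial ℚ) Kq) (Polynomial.C a) = algebraMap ℚ Kq a := by
        rw [Polynomial.C_eq_algebraMap, ← IsScalarTower.algebraMap_apply]
      rw [hC, eq_ratCast (algebraMap ℚ Kq) a]
      simp [map_ratCast]
    · simp only [RingHom.comp_apply]
      rw [RatFunc.algebraMap_X, show (RatFunc.X : Kq) = uu from rfl]
      rw [phi_uu, map_neg, map_inv₀, phi_uu, inv_neg, inv_inv, neg_neg]
      simp [uu]
  exact DFunLike.congr_fun this x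

lemma scalar_aux : (uu ^ 2)⁻¹ * (uu ^ 2 - 1) + ((uu ^ 2)⁻¹ - 1) = 0 := by
  have h : (uu ^ 2)⁻¹ * uu ^ 2 = 1 := inv_mul_cancel₀ q_ne
  linear_combination h

lemma phi_q : phi (uu ^ 2) = (uu ^ 2)⁻¹ := by
  rw [map_pow, phi_uu, neg_sq, inv_pow]

lemma phi_q_sub_one : phi (uu ^ 2 - 1) = (uu ^ 2)⁻¹ - 1 := by
  rw [map_sub, map_one, phi_q]

namespace HeckeAlgebra

variable {B W : Type*} [Group W] {M : CoxeterMatrix B}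
variable {H : Type*} [Ring H] [Algebra Kq H]
variable {cs : CoxeterSystem M W} (ha : HeckeAlgebra cs H)

lemma TsTs (i : B) : ha.T (cs.simple i) * ha.T (cs.simple i)
    = (uu ^ 2) • (1 : H) + (uu ^ 2 - 1) • ha.T (cs.simple i) := by
  have h := ha.T_mul_of_gt i (cs.simple i) (by
    rw [cs.simple_mul_simple_self, cs.length_one, cs.length_simple]; norm_num)
  rwa [cs.simple_mul_simple_self, ha.T_one] at h

/-- The inverse of `T_s`. -/
def Sinv (i : B) : H := (uu ^ 2)⁻¹ • ha.T (cs.simple i) + ((uu ^ 2)⁻¹ - 1) • 1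

lemma Ts_mul_Sinv (i : B) : ha.T (cs.simple i) * ha.Sinv i = 1 := by
  rw [Sinv, mul_add, mul_smul_comm, mul_smul_comm, mul_one, TsTs]
  rw [smul_add, smul_smul, smul_smul, inv_mul_cancel₀ q_ne]
  rw [add_assoc, ← add_smul]
  rw [scalar_aux, zero_smul, add_zero, one_smul]

lemma Sinv_mul_Ts (i : B) : ha.Sinv i * ha.T (cs.simple i) = 1 := by
  rw [Sinv, add_mul, smul_mul_assoc, smul_mul_assoc, one_mul, TsTs]
  rw [smul_add, smul_smul, smul_smul, inv_mul_cancel₀ q_ne]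
  rw [add_assoc, ← add_smul]
  rw [scalar_aux, zero_smul, add_zero, one_smul]

lemma isUnit_Ts (i : B) : IsUnit (ha.T (cs.simple i)) :=
  ⟨⟨ha.T (cs.simple i), ha.Sinv i, ha.Ts_mul_Sinv i, ha.Sinv_mul_Ts i⟩, rfl⟩

lemma Sinv_sq (i : B) : ha.Sinv i * ha.Sinv i
    = (uu ^ 2)⁻¹ • (1 : H) + ((uu ^ 2)⁻¹ - 1) • ha.Sinv i := by
  nth_rewrite 2 [Sinv]
  rw [mul_add, mul_smul_comm, mul_smul_comm, mul_one, Sinv_mul_Ts]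

lemma T_wordProd (ω : List B) (hω : cs.IsReduced ω) :
    ha.T (cs.wordProd ω) = (ω.map fun i => ha.T (cs.simple i)).prod := by
  induction ω with
  | nil => simp [ha.T_one]
  | cons i ω ih =>
    have hω' : cs.IsReduced ω := by
      have := CoxeterSystem.IsReduced.drop (ω := i :: ω) hω 1
      simpa using this
    have hlen : cs.length (cs.wordProd ω) < cs.length (cs.simple i * cs.wordProd ω) := by
      rw [← cs.wordProd_cons]
      unfold CoxeterSystem.IsReduced at hω hω'
      rw [hω, hω']
      simp
    rw [cs.wordProd_cons, ← ha.T_mul_of_lt i _ hlen, ih hω', List.map_cons, List.prod_cons]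

lemma isUnit_listProd (ω : List B) : IsUnit ((ω.map fun i => ha.T (cs.simple i)).prod) := by
  induction ω with
  | nil => simp
  | cons i ω ih =>
    rw [List.map_cons, List.prod_cons]
    exact (ha.isUnit_Ts i).mul ih

lemma isUnit_T (w : W) : IsUnit (ha.T w) := by
  obtain ⟨ω, hred, rfl⟩ := cs.exists_reduced_word' w
  rw [ha.T_wordProd ω hred]
  exact ha.isUnit_listProd ω

lemma T_mul_simple_of_lt (i : B) (w : W)
    (h : cs.length w < cs.length (w * cs.simple i)) :
    ha.T w * ha.T (cs.simple i) = ha.T (w * cs.simple i) := by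
  obtain ⟨ω, hred, rfl⟩ := cs.exists_reduced_word' w
  have hlen : cs.length (cs.wordProd ω * cs.simple i) = cs.length (cs.wordProd ω) + 1 := by
    rcases cs.length_mul_simple (cs.wordProd ω) i with h' | h'
    · exact h'
    · omega
  have hπ : cs.wordProd (ω ++ [i]) = cs.wordProd ω * cs.simple i := by
    rw [cs.wordProd_append, cs.wordProd_singleton]
  have hred2 : cs.IsReduced (ω ++ [i]) := by
    unfold CoxeterSystem.IsReduced at hred ⊢
    rw [hπ, hlen, List.length_append, hred]
    simp
  rw [← hπ, ha.T_wordProd _ hred2, ha.T_wordProd _ hred, List.map_append, List.prod_append]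
  simp

lemma T_mul_simple_of_gt (i : B) (w : W)
    (h : cs.length (w * cs.simple i) < cs.length w) :
    ha.T w * ha.T (cs.simple i)
      = (uu ^ 2) • ha.T (w * cs.simple i) + (uu ^ 2 - 1) • ha.T w := by
  have hw : (w * cs.simple i) * cs.simple i = w := by
    rw [mul_assoc, cs.simple_mul_simple_self, mul_one]
  have h1 : cs.length (w * cs.simple i) < cs.length ((w * cs.simple i) * cs.simple i) := by
    rw [hw]; exact h
  have h2 : ha.T (w * cs.simple i) * ha.T (cs.simple i) = ha.T w := by
    rw [ha.T_mul_simple_of_lt i _ h1, hw]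
  calc ha.T w * ha.T (cs.simple i)
      = ha.T (w * cs.simple i) * (ha.T (cs.simple i) * ha.T (cs.simple i)) := by
        rw [← mul_assoc, h2]
    _ = _ := by
        rw [TsTs, mul_add, mul_smul_comm, mul_smul_comm, mul_one, h2]

/-- `Ti w` is the inverse of `T (w⁻¹)`. -/
def Ti (w : W) : H := Ring.inverse (ha.T w⁻¹)

lemma inverse_eq {a b : H} (hu : IsUnit a) (h : a * b = 1) : Ring.inverse a = b := by
  rw [← mul_one (Ring.inverse a), ← h, ← mul_assoc, Ring.inverse_mul_cancel a hu, one_mul]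

lemma Ti_one : ha.Ti 1 = 1 := by
  rw [Ti, inv_one, ha.T_one, Ring.inverse_one]

lemma Ti_simple (i : B) : ha.Ti (cs.simple i) = ha.Sinv i := by
  rw [Ti, cs.inv_simple]
  exact inverse_eq (ha.isUnit_Ts i) (ha.Ts_mul_Sinv i)

lemma Ti_descent (i : B) (w : W) (h : cs.length (cs.simple i * w) < cs.length w) :
    ha.Ti w = ha.Sinv i * ha.Ti (cs.simple i * w) := by
  have e : (cs.simple i * w)⁻¹ * cs.simple i = w⁻¹ := by
    rw [mul_inv_rev, cs.inv_simple, mul_assoc, cs.simple_mul_simple_self, mul_one]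
  have hl : cs.length ((cs.simple i * w)⁻¹)
      < cs.length ((cs.simple i * w)⁻¹ * cs.simple i) := by
    rw [e, cs.length_inv, cs.length_inv]; exact h
  have key : ha.T ((cs.simple i * w)⁻¹) * ha.T (cs.simple i) = ha.T w⁻¹ := by
    rw [ha.T_mul_simple_of_lt i _ hl, e]
  rw [Ti, Ti]
  apply inverse_eq (ha.isUnit_T _)
  rw [← key, mul_assoc, ← mul_assoc (ha.T (cs.simple i)), Ts_mul_Sinv, one_mul,
    Ring.mul_inverse_cancel _ (ha.isUnit_T _)]

lemma Ti_ascent (i : B) (w : W) (h : cs.length w < cs.length (cs.simple i * w)) :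
    ha.Ti (cs.simple i * w) = ha.Sinv i * ha.Ti w := by
  have e : w⁻¹ * cs.simple i = (cs.simple i * w)⁻¹ := by
    rw [mul_inv_rev, cs.inv_simple]
  have hl : cs.length w⁻¹ < cs.length (w⁻¹ * cs.simple i) := by
    rw [e, cs.length_inv, cs.length_inv]; exact h
  have key : ha.T w⁻¹ * ha.T (cs.simple i) = ha.T ((cs.simple i * w)⁻¹) := by
    rw [ha.T_mul_simple_of_lt i _ hl, e]
  rw [Ti, Ti]
  apply inverse_eq (ha.isUnit_T _)
  rw [← key, mul_assoc, ← mul_assoc (ha.T (cs.simple i)), Ts_mul_Sinv, one_mul,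
    Ring.mul_inverse_cancel _ (ha.isUnit_T _)]

/-- The bar-type semilinear involution on the Hecke algebra, sending
`T_w` to `T_{w⁻¹}⁻¹` and twisting scalars by `phi`. -/
def Psi (h : H) : H := (ha.basis.repr h).sum fun w c => phi c • ha.Ti w

lemma Psi_add (x y : H) : ha.Psi (x + y) = ha.Psi x + ha.Psi y := by
  unfold Psi
  rw [map_add]
  exact Finsupp.sum_add_index' (by simp) (by intros; rw [map_add, add_smul])

/-- `Psi` as an additive monoid hom. -/
def PsiHom : H →+ H := AddMonoidHom.mk' ha.Psi ha.Psi_add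

lemma Psi_smul (c : Kq) (x : H) : ha.Psi (c • x) = phi c • ha.Psi x := by
  unfold Psi
  rw [map_smul, Finsupp.sum_smul_index' (by simp), Finsupp.smul_sum]
  exact Finsupp.sum_congr fun w _ => by rw [smul_eq_mul, map_mul, mul_smul]

lemma Psi_T (w : W) : ha.Psi (ha.T w) = ha.Ti w := by
  unfold Psi
  rw [← ha.basis_eq, ha.basis.repr_self, Finsupp.sum_single_index (by simp)]
  simp

lemma expand (h : H) : h = (ha.basis.repr h).sum fun w c => c • ha.T w := by
  conv_lhs => rw [← ha.basis.linearCombination_repr h]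
  rw [Finsupp.linearCombination_apply]
  exact Finsupp.sum_congr fun w _ => by rw [ha.basis_eq]

lemma Psi_Ts_mul_T (i : B) (w : W) :
    ha.Psi (ha.T (cs.simple i) * ha.T w) = ha.Sinv i * ha.Psi (ha.T w) := by
  rcases lt_or_gt_of_ne (cs.length_simple_mul_ne w i) with hlt | hgt
  · rw [ha.T_mul_of_gt i w hlt, Psi_add, Psi_smul, Psi_smul, Psi_T, Psi_T, phi_q,
      phi_q_sub_one, ha.Ti_descent i w hlt, ← mul_assoc, Sinv_sq, add_mul,
      smul_mul_assoc, smul_mul_assoc, one_mul]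
  · rw [ha.T_mul_of_lt i w hgt, Psi_T, Psi_T, ha.Ti_ascent i w hgt]

lemma Psi_finsupp_sum (g : W →₀ Kq) (f : W → Kq → H) :
    ha.Psi (g.sum f) = g.sum fun w c => ha.Psi (f w c) :=
  map_finsuppSum ha.PsiHom g f

lemma Psi_Ts_mul (i : B) (h : H) :
    ha.Psi (ha.T (cs.simple i) * h) = ha.Sinv i * ha.Psi h := by
  conv_lhs => rw [ha.expand h]
  conv_rhs => rw [ha.expand h]
  rw [Finsupp.mul_sum, ha.Psi_finsupp_sum, ha.Psi_finsupp_sum, Finsupp.mul_sum]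
  refine Finsupp.sum_congr fun w _ => ?_
  rw [mul_smul_comm, Psi_smul, Psi_smul, ha.Psi_Ts_mul_T i w, mul_smul_comm]

lemma Psi_T_mul : ∀ (n : ℕ) (w : W), cs.length w = n → ∀ h : H,
    ha.Psi (ha.T w * h) = ha.Ti w * ha.Psi h := by
  intro n
  induction n using Nat.strong_induction_on with
  | _ n ih =>
    intro w hn h
    rcases eq_or_ne w 1 with rfl | hw1
    · rw [ha.T_one, one_mul, Ti_one, one_mul]
    · obtain ⟨i, hd⟩ := cs.exists_leftDescent_of_ne_one hw1
      have hd' : cs.length (cs.simple i * w) < cs.length w := hd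
      have hww : cs.simple i * (cs.simple i * w) = w := by
        rw [← mul_assoc, cs.simple_mul_simple_self, one_mul]
      have hasc : cs.length (cs.simple i * w)
          < cs.length (cs.simple i * (cs.simple i * w)) := by rw [hww]; exact hd'
      have hT : ha.T w = ha.T (cs.simple i) * ha.T (cs.simple i * w) := by
        rw [ha.T_mul_of_lt i _ hasc, hww]
      rw [hT, mul_assoc, ha.Psi_Ts_mul,
        ih (cs.length (cs.simple i * w)) (by omega) _ rfl h,
        ha.Ti_descent i w hd', mul_assoc]

lemma Psi_mul (x y : H) : ha.Psi (x * y) = ha.Psi x * ha.Psi y := by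
  conv_lhs => rw [ha.expand x]
  rw [Finsupp.sum_mul, ha.Psi_finsupp_sum]
  have hx : ha.Psi x = (ha.basis.repr x).sum fun w c => phi c • ha.Ti w := rfl
  rw [hx, Finsupp.sum_mul]
  refine Finsupp.sum_congr fun w _ => ?_
  rw [smul_mul_assoc, Psi_smul, ha.Psi_T_mul (cs.length w) w rfl y, ← smul_mul_assoc]

lemma Psi_one : ha.Psi 1 = 1 := by
  conv_lhs => rw [← ha.T_one]
  rw [Psi_T, Ti_one]

lemma Psi_zero : ha.Psi 0 = 0 := by
  unfold Psi
  rw [map_zero, Finsupp.sum_zero_index]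

end HeckeAlgebra

section ConjSemilinear

variable {V : Type*}

/-- The `phi`-semilinear involution of `V →₀ Kq` applying `phi` coordinatewise. -/
def Sph : (V →₀ Kq) → (V →₀ Kq) := fun x => Finsupp.mapRange phi phi.map_zero x

lemma Sph_add (x y : V →₀ Kq) : Sph (x + y) = Sph x + Sph y := by
  ext v
  simp [Sph, Finsupp.mapRange_apply, map_add]

lemma Sph_smul (c : Kq) (x : V →₀ Kq) : Sph (c • x) = phi c • Sph x := by
  ext v
  simp [Sph, Finsupp.mapRange_apply, smul_eq_mul, map_mul]

lemma Sph_Sph (x : V →₀ Kq) : Sph (Sph x) = x := by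
  ext v
  simp [Sph, Finsupp.mapRange_apply, phi_phi]

lemma Sph_single (a : V) (c : Kq) : Sph (single a c) = single a (phi c) :=
  Finsupp.mapRange_single

/-- Conjugation of an endomorphism by `Sph`. -/
def Cj (f : Module.End Kq (V →₀ Kq)) : Module.End Kq (V →₀ Kq) where
  toFun x := Sph (f (Sph x))
  map_add' x y := by rw [Sph_add, map_add, Sph_add]
  map_smul' c x := by rw [Sph_smul, map_smul, Sph_smul, phi_phi]; rfl

lemma Cj_apply (f : Module.End Kq (V →₀ Kq)) (x : V →₀ Kq) : Cj f x = Sph (f (Sph x)) := rfl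

lemma Cj_one : Cj (1 : Module.End Kq (V →₀ Kq)) = 1 := by
  ext x
  simp [Cj_apply, Module.End.one_apply, Sph_Sph]

lemma Cj_mul (f g : Module.End Kq (V →₀ Kq)) : Cj (f * g) = Cj f * Cj g := by
  ext x
  simp [Cj_apply, Module.End.mul_apply, Sph_Sph]

lemma Cj_add (f g : Module.End Kq (V →₀ Kq)) : Cj (f + g) = Cj f + Cj g := by
  ext x
  simp [Cj_apply, Sph_add]

lemma Cj_zero : Cj (0 : Module.End Kq (V →₀ Kq)) = 0 := by
  ext x
  simp [Cj_apply]
  exact Sph_Sph 0 ▸ (by simp [Sph])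

lemma Cj_smul (c : Kq) (f : Module.End Kq (V →₀ Kq)) : Cj (c • f) = phi c • Cj f := by
  ext x
  simp [Cj_apply, Sph_smul]

end ConjSemilinear

section MainConstruction

variable {B W : Type*} [Group W] {M : CoxeterMatrix B}
variable {H : Type*} [Ring H] [Algebra Kq H]
variable {V : Type*}

/-- The representation on the reversed digraph, obtained by composing `ρ` with
the semilinear involution `Psi` of `H` and conjugating by `Sph`. -/
def rhoRev (cs : CoxeterSystem M W) (ha : HeckeAlgebra cs H)
    (ρ : H →ₐ[Kq] Module.End Kq (V →₀ Kq)) : H →ₐ[Kq] Module.End Kq (V →₀ Kq) where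
  toFun h := Cj (ρ (ha.Psi h))
  map_one' := by rw [ha.Psi_one, map_one, Cj_one]
  map_mul' x y := by rw [ha.Psi_mul, map_mul, Cj_mul]
  map_zero' := by rw [ha.Psi_zero, map_zero, Cj_zero]
  map_add' x y := by rw [ha.Psi_add, map_add, Cj_add]
  commutes' c := by
    rw [Algebra.algebraMap_eq_smul_one, ha.Psi_smul, ha.Psi_one, map_smul, map_one,
      Cj_smul, Cj_one, phi_phi, Algebra.algebraMap_eq_smul_one]

lemma rhoRev_apply_Ts (cs : CoxeterSystem M W) (ha : HeckeAlgebra cs H)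
    (ρ : H →ₐ[Kq] Module.End Kq (V →₀ Kq)) (i : B) (x : V →₀ Kq) :
    rhoRev cs ha ρ (ha.T (cs.simple i)) x
      = Sph ((uu ^ 2)⁻¹ • ρ (ha.T (cs.simple i)) (Sph x)
          + ((uu ^ 2)⁻¹ - 1) • Sph x) := by
  show Cj (ρ (ha.Psi (ha.T (cs.simple i)))) x = _
  rw [ha.Psi_T, ha.Ti_simple, HeckeAlgebra.Sinv, map_add, map_smul, map_smul, map_one]
  rw [Cj_apply]
  simp only [LinearMap.add_apply, LinearMap.smul_apply, Module.End.one_apply]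

end MainConstruction


lemma phi_inv_q : phi ((uu ^ 2)⁻¹) = uu ^ 2 := by
  rw [map_inv₀, phi_q, inv_inv]

lemma phi_inv_u : phi (uu⁻¹) = -uu := by
  rw [map_inv₀, phi_uu, inv_neg, inv_inv]

lemma combo1 {V : Type*} (A Bb : V →₀ Kq) (c1 c2 c3 c4 : Kq) :
    c1 • (c2 • A + c3 • Bb) + c4 • A = (c1 * c2 + c4) • A + (c1 * c3) • Bb := by
  rw [smul_add, smul_smul, smul_smul, add_right_comm, ← add_smul]

lemma Sph_combo {V : Type*} (x y : V) (c d : Kq) :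
    Sph (c • single x (1:Kq) + d • single y (1:Kq))
      = phi c • single x (1:Kq) + phi d • single y (1:Kq) := by
  rw [Sph_add, Sph_smul, Sph_smul, Sph_single, Sph_single, phi.map_one]

lemma isWDigraph_rev_of {B W : Type*} [Group W] {M : CoxeterMatrix B}
    {H : Type*} [Ring H] [Algebra Kq H] {V : Type*}
    (cs : CoxeterSystem M W) (ha : HeckeAlgebra cs H)
    (Γ : SLabeledDigraph V B) (h : IsWDigraph cs ha Γ) : IsWDigraph cs ha Γ.rev := by
  have h0 : uu ≠ 0 := uu_ne
  obtain ⟨ρ, hρ⟩ := h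
  refine ⟨rhoRev cs ha ρ, ?_⟩
  intro a b i
  constructor
  · intro he
    have he' : Γ.Edge b a i false := he
    obtain ⟨h1, h2⟩ := (hρ b a i).1 he'
    constructor
    · rw [rhoRev_apply_Ts, Sph_single, phi.map_one, h2, combo1, scalar_aux,
        inv_mul_cancel₀ q_ne, zero_smul, zero_add, one_smul, Sph_single, phi.map_one]
    · rw [rhoRev_apply_Ts, Sph_single, phi.map_one, h1, Sph_combo, phi_inv_q,
        map_sub, map_one, phi_inv_q, add_comm]
  · intro he
    have he' : Γ.Edge b a i true := he
    obtain ⟨h1, h2⟩ := (hρ b a i).2 he'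
    constructor
    · rw [rhoRev_apply_Ts, Sph_single, phi.map_one, h2, combo1]
      have e1 : (uu^2)⁻¹ * (uu^2 - uu - 1) + ((uu^2)⁻¹ - 1) = -uu⁻¹ := by
        field_simp
        ring
      have e2 : (uu^2)⁻¹ * (uu^2 - uu) = 1 - uu⁻¹ := by
        field_simp
      rw [e1, e2, Sph_combo, map_neg, phi_inv_u, neg_neg, map_sub, map_one, phi_inv_u,
        sub_neg_eq_add, add_comm (1:Kq) uu]
    · rw [rhoRev_apply_Ts, Sph_single, phi.map_one, h1, combo1]
      have e3 : (uu^2)⁻¹ * uu + ((uu^2)⁻¹ - 1) = uu⁻¹ + (uu^2)⁻¹ - 1 := by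
        field_simp
        ring
      have e4 : (uu^2)⁻¹ * (uu + 1) = uu⁻¹ + (uu^2)⁻¹ := by
        field_simp
      rw [e3, e4, Sph_combo]
      simp only [map_sub, map_add, map_one, phi_inv_u, phi_inv_q]
      have g3 : (-uu + uu^2 - 1 : Kq) = uu^2 - uu - 1 := by ring
      have g4 : (-uu + uu^2 : Kq) = uu^2 - uu := by ring
      rw [g3, g4]

/-- An `S`-labeled digraph `Γ` is a `W`-digraph if and only if
its reversal `Γ_rev` is a `W`-digraph. -/
theorem wdigraph_rev_iff {V : Type*} (cs : CoxeterSystem M W) (ha : HeckeAlgebra cs H)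
    (Γ : SLabeledDigraph V B) :
    IsWDigraph cs ha Γ ↔ IsWDigraph cs ha Γ.rev := by
  constructor
  · exact isWDigraph_rev_of cs ha Γ
  · intro h
    exact isWDigraph_rev_of cs ha Γ.rev h
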